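/- Let c_1, …, c_m be real numbers with P_f ≤ c_i ≤ P for all i, and let 1 ≤ n ≤ m. For any n-element subset A of {1, …, m}, the sum of costs over A exceeds the minimum possible sum over any n-element subset by at most (P − P_f)·min(n, m − n); in particular the excess is at most ⌊m/2⌋·(P − P_f), it is at most (P − P_f)·n when n ≤ ⌊m/2⌋, at most (P − P_f)·(m − n) when ⌊m/2⌋ < n < m, and zero when n = m. Consequently, the S-regret of the Cheapest-Feasible Matching relative to the Greedy-Cheapest Matching in a period with price P > P_f, m providers and n jobs, is bounded by these quantities. -/
import Mathlib


/-- with all costs in `[P_f, P]`, the total cost of any `n`-element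
set of providers exceeds the minimum possible total over `n`-element sets by at
most `(P − P_f)·min(n, m−n)`; in particular by at most `⌊m/2⌋·(P − P_f)`, by at
most `(P − P_f)·n` when `n ≤ ⌊m/2⌋`, by at most `(P − P_f)·(m − n)` when
`⌊m/2⌋ < n < m`, and the excess is zero when `n = m`. These bound the S-regret of
Cheapest-Feasible Matching relative to Greedy-Cheapest Matching. -/
theorem s_regret_bounds {m : ℕ} (c : Fin m → ℝ) (P_f P : ℝ)
    (hc : ∀ i : Fin m, c i ∈ Set.Icc P_f P)
    (n : ℕ) (hn1 : 1 ≤ n) (hnm : n ≤ m)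
    (A : Finset (Fin m)) (hA : A.card = n) :
    (∀ B : Finset (Fin m), B.card = n →
      (∑ i ∈ A, c i) - (∑ i ∈ B, c i) ≤ (P - P_f) * ((min n (m - n) : ℕ) : ℝ)) ∧
    (∀ B : Finset (Fin m), B.card = n →
      (∑ i ∈ A, c i) - (∑ i ∈ B, c i) ≤ ((m / 2 : ℕ) : ℝ) * (P - P_f)) ∧
    (n ≤ m / 2 → ∀ B : Finset (Fin m), B.card = n →
      (∑ i ∈ A, c i) - (∑ i ∈ B, c i) ≤ (P - P_f) * (n : ℝ)) ∧
    (m / 2 < n → n < m → ∀ B : Finset (Fin m), B.card = n →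
      (∑ i ∈ A, c i) - (∑ i ∈ B, c i) ≤ (P - P_f) * (((m - n : ℕ) : ℝ))) ∧
    (n = m → ∀ B : Finset (Fin m), B.card = n →
      (∑ i ∈ A, c i) - (∑ i ∈ B, c i) = 0) := by
  -- basic facts
  have hm1 : 1 ≤ m := le_trans hn1 hnm
  have hPf : P_f ≤ P := by
    have hA0 : A.Nonempty := Finset.card_pos.mp (by omega)
    obtain ⟨i, _⟩ := hA0
    exact le_trans (hc i).1 (hc i).2
  have hPP : (0:ℝ) ≤ P - P_f := by linarith
  -- key bound
  have key : ∀ B : Finset (Fin m), B.card = n →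
      (∑ i ∈ A, c i) - (∑ i ∈ B, c i) ≤ (P - P_f) * (((A \ B).card : ℕ) : ℝ) := by
    intro B hB
    have hsplitA : (∑ i ∈ A, c i) = (∑ i ∈ A \ B, c i) + (∑ i ∈ A ∩ B, c i) := by
      have h := Finset.sum_sdiff (f := c) (Finset.inter_subset_left (s₁ := A) (s₂ := B))
      rw [Finset.sdiff_inter_self_left] at h
      exact h.symm
    have hsplitB : (∑ i ∈ B, c i) = (∑ i ∈ B \ A, c i) + (∑ i ∈ A ∩ B, c i) := by
      have h := Finset.sum_sdiff (f := c) (Finset.inter_subset_right (s₁ := A) (s₂ := B))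
      rw [Finset.sdiff_inter_self_right] at h
      exact h.symm
    have hcard : (A \ B).card = (B \ A).card := by
      have := Finset.card_sdiff_add_card_inter A B
      have := Finset.card_sdiff_add_card_inter B A
      rw [Finset.inter_comm B A] at this
      omega
    have hup : (∑ i ∈ A \ B, c i) ≤ ((A \ B).card : ℝ) * P := by
      calc (∑ i ∈ A \ B, c i) ≤ ∑ _i ∈ A \ B, P :=
            Finset.sum_le_sum fun i _ => (hc i).2
        _ = ((A \ B).card : ℝ) * P := by rw [Finset.sum_const, nsmul_eq_mul]
    have hdown : ((B \ A).card : ℝ) * P_f ≤ (∑ i ∈ B \ A, c i) := by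
      calc ((B \ A).card : ℝ) * P_f = ∑ _i ∈ B \ A, P_f := by
            rw [Finset.sum_const, nsmul_eq_mul]
        _ ≤ ∑ i ∈ B \ A, c i := Finset.sum_le_sum fun i _ => (hc i).1
    rw [hsplitA, hsplitB, hcard] at *
    nlinarith [hup, hdown]
  have hcard_le : ∀ B : Finset (Fin m), B.card = n → (A \ B).card ≤ min n (m - n) := by
    intro B hB
    have h1 : (A \ B).card ≤ n := hA ▸ Finset.card_le_card (Finset.sdiff_subset)
    have h2 : (A \ B).card ≤ m - n := by
      have hsub : A \ B ⊆ Bᶜ := fun x hx => by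
        simp only [Finset.mem_compl]
        exact (Finset.mem_sdiff.mp hx).2
      have := Finset.card_le_card hsub
      rw [Finset.card_compl, hB] at this
      simpa using this
    omega
  have main : ∀ B : Finset (Fin m), B.card = n →
      (∑ i ∈ A, c i) - (∑ i ∈ B, c i) ≤ (P - P_f) * ((min n (m - n) : ℕ) : ℝ) := by
    intro B hB
    refine le_trans (key B hB) ?_
    exact mul_le_mul_of_nonneg_left (Nat.cast_le.mpr (hcard_le B hB)) hPP
  refine ⟨main, ?_, ?_, ?_, ?_⟩
  · intro B hB
    refine le_trans (main B hB) ?_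
    rw [mul_comm]
    refine mul_le_mul_of_nonneg_right ?_ hPP
    exact_mod_cast Nat.cast_le.mpr (by omega : min n (m - n) ≤ m / 2)
  · intro hn B hB
    refine le_trans (main B hB) ?_
    exact mul_le_mul_of_nonneg_left (Nat.cast_le.mpr (by omega)) hPP
  · intro h1 h2 B hB
    refine le_trans (main B hB) ?_
    exact mul_le_mul_of_nonneg_left (Nat.cast_le.mpr (by omega)) hPP
  · intro hnm' B hB
    have hAu : A = Finset.univ := Finset.eq_univ_of_card A (by simp [hA, hnm'])
    have hBu : B = Finset.univ := Finset.eq_univ_of_card B (by simp [hB, hnm'])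
    rw [hAu, hBu, sub_self]
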